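/- If (A, B) is a deletion-minimal homogeneous pair of strong cliques in a trigraph G, then there is a square-connected homogeneous pair of strong cliques (A', B') in G such that A' ⊆ A and B' ⊆ B. -/

import Mathlib

/-- A trigraph on a vertex type `V`: a symmetric adjacency function with values in
`{1, 0, -1}`, zero on the diagonal, such that semiedges form a matching. -/
structure Trigraph (V : Type) where
  θ : V → V → ℤ
  range_mem : ∀ u v, θ u v = 1 ∨ θ u v = 0 ∨ θ u v = -1
  symm : ∀ u v, θ u v = θ v u
  refl_zero : ∀ v, θ v v = 0
  semi_matching : ∀ u v w : V, u ≠ v → u ≠ w → v ≠ w → θ u v = 0 → θ u w ≠ 0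

namespace Trigraph

variable {V V' V'' : Type}

/-- `u` and `v` are strongly adjacent. -/
def StrongAdj (G : Trigraph V) (u v : V) : Prop := G.θ u v = 1

/-- Distinct `u` and `v` are semiadjacent. -/
def SemiAdj (G : Trigraph V) (u v : V) : Prop := u ≠ v ∧ G.θ u v = 0

/-- Distinct `u` and `v` are adjacent. -/
def Adj (G : Trigraph V) (u v : V) : Prop := u ≠ v ∧ (G.θ u v = 1 ∨ G.θ u v = 0)

/-- Distinct `u` and `v` are antiadjacent. -/
def AntiAdj (G : Trigraph V) (u v : V) : Prop := u ≠ v ∧ (G.θ u v = 0 ∨ G.θ u v = -1)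

/-- `u` and `v` are strongly antiadjacent. -/
def StrongAntiAdj (G : Trigraph V) (u v : V) : Prop := G.θ u v = -1

/-- `X` is strongly complete to `Y`. -/
def StronglyComplete (G : Trigraph V) (X Y : Set V) : Prop :=
  ∀ u ∈ X, ∀ v ∈ Y, G.StrongAdj u v

/-- `X` is strongly anticomplete to `Y`. -/
def StronglyAnticomplete (G : Trigraph V) (X Y : Set V) : Prop :=
  ∀ u ∈ X, ∀ v ∈ Y, G.StrongAntiAdj u v

/-- A strong clique: pairwise strongly adjacent vertices. -/
def IsStrongClique (G : Trigraph V) (K : Set V) : Prop := K.Pairwise G.StrongAdj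

/-- A stable set: pairwise antiadjacent vertices. -/
def IsStableSet (G : Trigraph V) (S : Set V) : Prop := S.Pairwise G.AntiAdj

/-- The neighbourhood of a vertex: the set of vertices adjacent to it. -/
def neighborhood (G : Trigraph V) (v : V) : Set V := {u | G.Adj v u}

/-- Claw-free: no vertex has three pairwise antiadjacent vertices in its neighbourhood. -/
def ClawFree (G : Trigraph V) : Prop :=
  ¬ ∃ v a b c : V, G.Adj v a ∧ G.Adj v b ∧ G.Adj v c ∧
    G.AntiAdj a b ∧ G.AntiAdj a c ∧ G.AntiAdj b c

/-- Cobipartite: the vertex set is the union of two strong cliques. -/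
def Cobipartite (G : Trigraph V) : Prop :=
  ∃ K1 K2 : Set V, G.IsStrongClique K1 ∧ G.IsStrongClique K2 ∧ K1 ∪ K2 = Set.univ

/-- Quasi-line: the neighbourhood of every vertex is the union of two strong cliques. -/
def QuasiLine (G : Trigraph V) : Prop :=
  ∀ v : V, ∃ K1 K2 : Set V, G.IsStrongClique K1 ∧ G.IsStrongClique K2 ∧
    G.neighborhood v = K1 ∪ K2

/-- Connected: any two vertices are joined by a sequence of consecutively adjacent vertices. -/
def Connected (G : Trigraph V) : Prop :=
  ∀ u v : V, Relation.ReflTransGen G.Adj u v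

/-- Non-degenerate: quasi-line and not cobipartite, or claw-free with stability number ≥ 3. -/
def NonDegenerate (G : Trigraph V) : Prop :=
  (G.QuasiLine ∧ ¬ G.Cobipartite) ∨
  (G.ClawFree ∧ ∃ S : Set V, G.IsStableSet S ∧ 3 ≤ S.ncard)

/-- A homogeneous set: `|V| > |X| ≥ 2` and every vertex outside `X` is strongly complete
or strongly anticomplete to `X`. -/
def HomogeneousSet (G : Trigraph V) (X : Set V) : Prop :=
  2 ≤ X.ncard ∧ X ≠ Set.univ ∧
  ∀ v ∉ X, G.StronglyComplete {v} X ∨ G.StronglyAnticomplete {v} X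

/-- `v1 v2 v3 v4` is a square: the pairs `v1v3`, `v2v4` are antiadjacent and the other
four pairs are adjacent. -/
def IsSquare (G : Trigraph V) (v1 v2 v3 v4 : V) : Prop :=
  G.AntiAdj v1 v3 ∧ G.AntiAdj v2 v4 ∧
  G.Adj v1 v2 ∧ G.Adj v2 v3 ∧ G.Adj v3 v4 ∧ G.Adj v4 v1

/-- `X` contains a square. -/
def HasSquareIn (G : Trigraph V) (X : Set V) : Prop :=
  ∃ v1 v2 v3 v4 : V, G.IsSquare v1 v2 v3 v4 ∧ ({v1, v2, v3, v4} : Set V) ⊆ X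

/-- Homogeneous pair of strong cliques `(A, B)`. -/
def HPOSC (G : Trigraph V) (A B : Set V) : Prop :=
  A.Nonempty ∧ B.Nonempty ∧ Disjoint A B ∧
  G.IsStrongClique A ∧ G.IsStrongClique B ∧
  ¬ (∃ a b : V, A = {a} ∧ B = {b}) ∧
  ∀ v ∉ A ∪ B,
    (G.StronglyComplete {v} A ∨ G.StronglyAnticomplete {v} A) ∧
    (G.StronglyComplete {v} B ∨ G.StronglyAnticomplete {v} B)

/-- Deletion-minimal homogeneous pair of strong cliques. -/
def DeletionMinimal (G : Trigraph V) (A B : Set V) : Prop :=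
  G.HPOSC A B ∧ G.HasSquareIn (A ∪ B) ∧
  (∀ a ∈ A, ¬ G.StronglyComplete {a} B ∧ ¬ G.StronglyAnticomplete {a} B) ∧
  (∀ b ∈ B, ¬ G.StronglyComplete {b} A ∧ ¬ G.StronglyAnticomplete {b} A)

/-- There is a square contained in `X` intersecting both `S1` and `S2`. -/
def SquareMeets (G : Trigraph V) (X S1 S2 : Set V) : Prop :=
  ∃ v1 v2 v3 v4 : V, G.IsSquare v1 v2 v3 v4 ∧ ({v1, v2, v3, v4} : Set V) ⊆ X ∧
    (({v1, v2, v3, v4} : Set V) ∩ S1).Nonempty ∧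
    (({v1, v2, v3, v4} : Set V) ∩ S2).Nonempty

/-- Square-connected homogeneous pair of strong cliques. -/
def SquareConnected (G : Trigraph V) (A B : Set V) : Prop :=
  G.HPOSC A B ∧
  (∀ A' A'' : Set V, A'.Nonempty → A''.Nonempty → A' ∪ A'' = A → Disjoint A' A'' →
    G.SquareMeets (A ∪ B) A' A'') ∧
  (∀ B' B'' : Set V, B'.Nonempty → B''.Nonempty → B' ∪ B'' = B → Disjoint B' B'' →
    G.SquareMeets (A ∪ B) B' B'')

/-- Inclusion-maximal square-connected homogeneous pair of strong cliques. -/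
def MaxSquareConnected (G : Trigraph V) (A B : Set V) : Prop :=
  G.SquareConnected A B ∧
  ∀ A' B' : Set V, G.SquareConnected A' B' → A ⊆ A' → B ⊆ B' → A' = A ∧ B' = B

/-- Two homogeneous pairs have skew intersection if a part of one intersects both
parts of the other. -/
def SkewIntersection (A1 B1 A2 B2 : Set V) : Prop :=
  ((A1 ∩ A2).Nonempty ∧ (A1 ∩ B2).Nonempty) ∨
  ((B1 ∩ A2).Nonempty ∧ (B1 ∩ B2).Nonempty) ∨
  ((A2 ∩ A1).Nonempty ∧ (A2 ∩ B1).Nonempty) ∨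
  ((B2 ∩ A1).Nonempty ∧ (B2 ∩ B1).Nonempty)

/-- Laminar: contains no square-connected homogeneous pair of strong cliques. -/
def Laminar (G : Trigraph V) : Prop := ¬ ∃ A B : Set V, G.SquareConnected A B

/-- `G` is a thickening of `G'` via the map `I` (equivalently, `G'` is an antithickening
of `G`): the `I v` are nonempty strong cliques partitioning `V(G)` respecting adjacency. -/
def IsThickening (G : Trigraph V) (G' : Trigraph V') (I : V' → Set V) : Prop :=
  (∀ v : V', (I v).Nonempty ∧ G.IsStrongClique (I v)) ∧
  (∀ u v : V', u ≠ v → Disjoint (I u) (I v)) ∧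
  (⋃ v : V', I v) = Set.univ ∧
  ∀ u v : V', u ≠ v →
    (G'.StrongAdj u v → G.StronglyComplete (I u) (I v)) ∧
    (G'.StrongAntiAdj u v → G.StronglyAnticomplete (I u) (I v)) ∧
    (G'.SemiAdj u v →
      ¬ G.StronglyComplete (I u) (I v) ∧ ¬ G.StronglyAnticomplete (I u) (I v))

/-- `G'` (with thickening map `I`) is an optimal antithickening of `G`: it is a laminar
antithickening with the maximum possible number of vertices. -/
def OptimalAntithickening (G : Trigraph V) (G' : Trigraph V') (I : V' → Set V) : Prop :=
  G.IsThickening G' I ∧ G'.Laminar ∧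
  ∀ (W : Type) (H : Trigraph W) (J : W → Set V),
    G.IsThickening H J → H.Laminar → Nat.card W ≤ Nat.card V'

/-- Isomorphism of trigraphs. -/
def Isomorphic (G1 : Trigraph V) (G2 : Trigraph V') : Prop :=
  ∃ f : V ≃ V', ∀ u v : V, G2.θ (f u) (f v) = G1.θ u v

end Trigraph

section SCAux

variable {V : Type}

def Sq4 (G : Trigraph V) (A B : Set V) (a a' b b' : V) : Prop :=
  a ∈ A ∧ a' ∈ A ∧ b ∈ B ∧ b' ∈ B ∧ a ≠ a' ∧ b ≠ b' ∧
  G.θ a b ≤ 0 ∧ G.θ a' b' ≤ 0 ∧ 0 ≤ G.θ a' b ∧ 0 ≤ G.θ a b'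

def SqRel (G : Trigraph V) (A B : Set V) (x y : V) : Prop :=
  ∃ a a' b b', Sq4 G A B a a' b b' ∧ x ∈ ({a, a', b, b'} : Set V) ∧
    y ∈ ({a, a', b, b'} : Set V)

lemma Sq4.swap {G : Trigraph V} {A B : Set V} {a a' b b' : V}
    (h : Sq4 G A B a a' b b') : Sq4 G A B a' a b' b := by
  obtain ⟨ha, ha', hb, hb', hne, hne', h1, h2, h3, h4⟩ := h
  exact ⟨ha', ha, hb', hb, hne.symm, hne'.symm, h2, h1, h4, h3⟩

lemma Sq4.flip {G : Trigraph V} {A B : Set V} {a a' b b' : V}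
    (h : Sq4 G A B a a' b b') : Sq4 G B A b b' a a' := by
  obtain ⟨ha, ha', hb, hb', hne, hne', h1, h2, h3, h4⟩ := h
  refine ⟨hb, hb', ha, ha', hne', hne, ?_, ?_, ?_, ?_⟩
  · have := G.symm a b; omega
  · have := G.symm a' b'; omega
  · have := G.symm a b'; omega
  · have := G.symm a' b; omega


section Homog

variable {G : Trigraph V} {A B C : Set V}
variable (hdisj : Disjoint A B)
variable (hCcl : ∀ x y, x ∈ C → SqRel G A B x y → y ∈ C)

include hdisj in
lemma quad_B {p p' s t z : V}
    (hsq : Sq4 G A B p p' s t)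
    (hz : z ∈ ({p, p', s, t} : Set V)) (hzB : z ∈ B) : z = s ∨ z = t := by
  simp only [Set.mem_insert_iff, Set.mem_singleton_iff] at hz
  rcases hz with rfl | rfl | rfl | rfl
  · exact absurd hzB (Set.disjoint_left.mp hdisj hsq.1)
  · exact absurd hzB (Set.disjoint_left.mp hdisj hsq.2.1)
  · exact Or.inl rfl
  · exact Or.inr rfl

lemma zloc {p p' s t z : V}
    (hsq : Sq4 G A B p p' s t) (hz : z ∈ ({p, p', s, t} : Set V)) :
    ((z = p ∨ z = p') ∧ z ∈ A) ∨ (z ∈ B ∧ (z = s ∨ z = t)) := by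
  simp only [Set.mem_insert_iff, Set.mem_singleton_iff] at hz
  rcases hz with rfl | rfl | rfl | rfl
  · exact Or.inl ⟨Or.inl rfl, hsq.1⟩
  · exact Or.inl ⟨Or.inr rfl, hsq.2.1⟩
  · exact Or.inr ⟨hsq.2.2.1, Or.inl rfl⟩
  · exact Or.inr ⟨hsq.2.2.2.1, Or.inr rfl⟩

variable {v : V} (hvA : v ∈ A) (hvC : v ∉ C)

include hCcl hvA hvC in
lemma forb {p p' s t : V}
    (hsq : Sq4 G A B p p' s t) (hsub : ({p, p', s, t} : Set V) ⊆ C) :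
    ¬ (G.θ v s ≤ 0 ∧ 0 ≤ G.θ v t) := by
  rintro ⟨h1, h2⟩
  obtain ⟨hp, hp', hs, ht, hne, hne', q1, q2, q3, q4⟩ := hsq
  have hvp' : v ≠ p' := fun e => hvC (e ▸ hsub (by simp))
  have hnew : Sq4 G A B v p' s t := ⟨hvA, hp', hs, ht, hvp', hne', h1, q2, q3, h2⟩
  exact hvC (hCcl s v (hsub (by simp)) ⟨_, _, _, _, hnew, by simp, by simp⟩)

include hCcl hvA hvC in
lemma pairVal {p p' s t : V}
    (hsq : Sq4 G A B p p' s t) (hsub : ({p, p', s, t} : Set V) ⊆ C) :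
    (G.θ v s = 1 ∧ G.θ v t = 1) ∨ (G.θ v s = -1 ∧ G.θ v t = -1) := by
  have f1 := forb hCcl hvA hvC hsq hsub
  have hsub' : ({p', p, t, s} : Set V) ⊆ C := fun x hx => hsub (by
    simp only [Set.mem_insert_iff, Set.mem_singleton_iff] at hx ⊢; tauto)
  have f2 := forb hCcl hvA hvC hsq.swap hsub'
  rcases G.range_mem v s with h1 | h1 | h1 <;> rcases G.range_mem v t with h2 | h2 | h2 <;>
    first
      | exact Or.inl ⟨h1, h2⟩
      | exact Or.inr ⟨h1, h2⟩
      | exact absurd ⟨by omega, by omega⟩ f1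
      | exact absurd ⟨by omega, by omega⟩ f2

include hCcl hvA hvC in
lemma noMixed {p p' s t q q' u w z : V}
    (h1 : Sq4 G A B p p' s t) (hsub1 : ({p, p', s, t} : Set V) ⊆ C)
    (h2 : Sq4 G A B q q' u w) (hsub2 : ({q, q', u, w} : Set V) ⊆ C)
    (hz1 : z = p ∨ z = p') (hz2 : z = q ∨ z = q')
    (e1 : G.θ v s = 1) (e2 : G.θ v t = 1)
    (f1 : G.θ v u = -1) (f2 : G.θ v w = -1) : False := by
  obtain ⟨hpA, hp'A, hsB, htB, hpp, hst, a1, a2, a3, a4⟩ := h1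
  obtain ⟨hqA, hq'A, huB, hwB, hqq, huw, b1, b2, b3, b4⟩ := h2
  obtain ⟨α, hαB, hzα, hvα⟩ : ∃ α, α ∈ B ∧ G.θ z α ≤ 0 ∧ G.θ v α = 1 := by
    rcases hz1 with rfl | rfl
    · exact ⟨s, hsB, a1, e1⟩
    · exact ⟨t, htB, a2, e2⟩
  obtain ⟨β, hβB, hzβ, hvβ⟩ : ∃ β, β ∈ B ∧ 0 ≤ G.θ z β ∧ G.θ v β = -1 := by
    rcases hz2 with rfl | rfl
    · exact ⟨w, hwB, b4, f2⟩
    · exact ⟨u, huB, b3, f1⟩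
  have hzC : z ∈ C := by
    rcases hz1 with rfl | rfl
    · exact hsub1 (by simp)
    · exact hsub1 (by simp)
  have hzA : z ∈ A := by rcases hz1 with rfl | rfl; exacts [hpA, hp'A]
  have hnew : Sq4 G A B v z β α :=
    ⟨hvA, hzA, hβB, hαB, fun e => hvC (e ▸ hzC), fun e => by rw [e] at hvβ; omega,
      by omega, hzα, hzβ, by omega⟩
  exact hvC (hCcl z v hzC ⟨_, _, _, _, hnew, by simp, by simp⟩)

include hdisj hCcl hvA hvC in
lemma crossVal {p p' s t q q' u w z : V}
    (h1 : Sq4 G A B p p' s t) (hsub1 : ({p, p', s, t} : Set V) ⊆ C)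
    (h2 : Sq4 G A B q q' u w) (hsub2 : ({q, q', u, w} : Set V) ⊆ C)
    (hz1 : z ∈ ({p, p', s, t} : Set V)) (hz2 : z ∈ ({q, q', u, w} : Set V)) :
    G.θ v s = G.θ v u := by
  have V1 := pairVal hCcl hvA hvC h1 hsub1
  have V2 := pairVal hCcl hvA hvC h2 hsub2
  rcases V1 with ⟨e1, e2⟩ | ⟨e1, e2⟩ <;> rcases V2 with ⟨f1, f2⟩ | ⟨f1, f2⟩
  · omega
  · exfalso
    rcases zloc h1 hz1 with ⟨hA1, hzA⟩ | ⟨hzB, hst⟩ <;>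
      rcases zloc h2 hz2 with ⟨hA2, hzA2⟩ | ⟨hzB2, huw⟩
    · exact noMixed hCcl hvA hvC h1 hsub1 h2 hsub2 hA1 hA2 e1 e2 f1 f2
    · exact Set.disjoint_left.mp hdisj hzA hzB2
    · exact Set.disjoint_left.mp hdisj hzA2 hzB
    · rcases hst with rfl | rfl <;> rcases huw with rfl | rfl <;> omega
  · exfalso
    rcases zloc h1 hz1 with ⟨hA1, hzA⟩ | ⟨hzB, hst⟩ <;>
      rcases zloc h2 hz2 with ⟨hA2, hzA2⟩ | ⟨hzB2, huw⟩
    · exact noMixed hCcl hvA hvC h2 hsub2 h1 hsub1 hA2 hA1 f1 f2 e1 e2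
    · exact Set.disjoint_left.mp hdisj hzA hzB2
    · exact Set.disjoint_left.mp hdisj hzA2 hzB
    · rcases hst with rfl | rfl <;> rcases huw with rfl | rfl <;> omega
  · omega

end Homog

section Homog2

variable {G : Trigraph V} {A B C : Set V}

lemma homogSide (hdisj : Disjoint A B)
    (hCsq : ∀ x ∈ C, ∃ p p' s t, Sq4 G A B p p' s t ∧ x ∈ ({p, p', s, t} : Set V) ∧
      ({p, p', s, t} : Set V) ⊆ C)
    (hCcl : ∀ x y, x ∈ C → SqRel G A B x y → y ∈ C)
    (hCconn : ∀ x y, x ∈ C → y ∈ C → Relation.ReflTransGen (SqRel G A B) x y)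
    (v : V) (hvA : v ∈ A) (hvC : v ∉ C) :
    (∀ b ∈ B ∩ C, G.θ v b = 1) ∨ (∀ b ∈ B ∩ C, G.θ v b = -1) := by
  by_cases hBC : (B ∩ C).Nonempty
  · obtain ⟨b1, hb1B, hb1C⟩ := hBC
    have main : ∀ y, Relation.ReflTransGen (SqRel G A B) b1 y →
        (y ∈ C ∧ ∀ p p' s t, Sq4 G A B p p' s t → y ∈ ({p, p', s, t} : Set V) →
          G.θ v s = G.θ v b1 ∧ G.θ v t = G.θ v b1) := by
      intro y hy
      induction hy with
      | refl =>
        refine ⟨hb1C, ?_⟩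
        intro p p' s t hsq hmem
        have hsub : ({p, p', s, t} : Set V) ⊆ C :=
          fun x hx => hCcl b1 x hb1C ⟨_, _, _, _, hsq, hmem, hx⟩
        have pv := pairVal hCcl hvA hvC hsq hsub
        rcases quad_B hdisj hsq hmem hb1B with rfl | rfl <;>
          rcases pv with ⟨e1, e2⟩ | ⟨e1, e2⟩ <;> exact ⟨by omega, by omega⟩
      | tail h1 h2 ih =>
        obtain ⟨q, q', u, w, hsq2, hcm, hym⟩ := h2
        have hsub2 : ({q, q', u, w} : Set V) ⊆ C :=
          fun z hz => hCcl _ z ih.1 ⟨_, _, _, _, hsq2, hcm, hz⟩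
        have hyC := hsub2 hym
        refine ⟨hyC, ?_⟩
        intro p p' s t hsq hmem
        have hsub1 : ({p, p', s, t} : Set V) ⊆ C :=
          fun z hz => hCcl _ z hyC ⟨_, _, _, _, hsq, hmem, hz⟩
        have hvals := ih.2 q q' u w hsq2 hcm
        have hcross := crossVal hdisj hCcl hvA hvC hsq hsub1 hsq2 hsub2 hmem hym
        have pv := pairVal hCcl hvA hvC hsq hsub1
        rcases pv with ⟨e1, e2⟩ | ⟨e1, e2⟩ <;> exact ⟨by omega, by omega⟩
    have key : ∀ b ∈ B ∩ C, G.θ v b = G.θ v b1 := by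
      rintro b ⟨hbB, hbC⟩
      obtain ⟨p, p', s, t, hsq, hmem, hsub⟩ := hCsq b hbC
      have := (main b (hCconn b1 b hb1C hbC)).2 p p' s t hsq hmem
      rcases quad_B hdisj hsq hmem hbB with rfl | rfl <;> omega
    have hb1val : G.θ v b1 = 1 ∨ G.θ v b1 = -1 := by
      obtain ⟨p, p', s, t, hsq, hmem, hsub⟩ := hCsq b1 hb1C
      have pv := pairVal hCcl hvA hvC hsq hsub
      rcases quad_B hdisj hsq hmem hb1B with rfl | rfl <;> rcases pv with ⟨e1, e2⟩ | ⟨e1, e2⟩ <;>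
        omega
    rcases hb1val with h | h
    · exact Or.inl fun b hb => by rw [key b hb, h]
    · exact Or.inr fun b hb => by rw [key b hb, h]
  · exact Or.inl fun b hb => absurd ⟨b, hb⟩ hBC

end Homog2

section Part

variable {G : Trigraph V} {A B C : Set V}

lemma quad_A {p p' s t z : V} (hdisj : Disjoint A B) (hsq : Sq4 G A B p p' s t)
    (hz : z ∈ ({p, p', s, t} : Set V)) (hzA : z ∈ A) : z = p ∨ z = p' := by
  simp only [Set.mem_insert_iff, Set.mem_singleton_iff] at hz
  rcases hz with rfl | rfl | rfl | rfl
  · exact Or.inl rfl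
  · exact Or.inr rfl
  · exact absurd hzA (Set.disjoint_right.mp hdisj hsq.2.2.1)
  · exact absurd hzA (Set.disjoint_right.mp hdisj hsq.2.2.2.1)

lemma partSide (hdisj : Disjoint A B)
    (hCsq : ∀ x ∈ C, ∃ p p' s t, Sq4 G A B p p' s t ∧ x ∈ ({p, p', s, t} : Set V) ∧
      ({p, p', s, t} : Set V) ⊆ C)
    (hCcl : ∀ x y, x ∈ C → SqRel G A B x y → y ∈ C)
    (hCconn : ∀ x y, x ∈ C → y ∈ C → Relation.ReflTransGen (SqRel G A B) x y)
    (A₁ A₂ : Set V) (ha1 : A₁.Nonempty) (ha2 : A₂.Nonempty)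
    (hu : A₁ ∪ A₂ = A ∩ C) (hd : Disjoint A₁ A₂) :
    ∃ a a' b b', Sq4 G A B a a' b b' ∧ ({a, a', b, b'} : Set V) ⊆ C ∧ a ∈ A₁ ∧ a' ∈ A₂ := by
  by_contra hno
  push_neg at hno
  -- classification of squares in C
  have typ : ∀ p p' s t, Sq4 G A B p p' s t → ({p, p', s, t} : Set V) ⊆ C →
      (p ∈ A₁ ∧ p' ∈ A₁) ∨ (p ∈ A₂ ∧ p' ∈ A₂) := by
    intro p p' s t hsq hsub
    have hswapsub : ({p', p, t, s} : Set V) ⊆ C := fun x hx => hsub (by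
      simp only [Set.mem_insert_iff, Set.mem_singleton_iff] at hx ⊢; tauto)
    have hp : p ∈ A₁ ∪ A₂ := by rw [hu]; exact ⟨hsq.1, hsub (by simp)⟩
    have hp' : p' ∈ A₁ ∪ A₂ := by rw [hu]; exact ⟨hsq.2.1, hsub (by simp)⟩
    rcases hp with hp | hp <;> rcases hp' with hp' | hp'
    · exact Or.inl ⟨hp, hp'⟩
    · exact absurd hp' (hno p p' s t hsq hsub hp)
    · exact absurd hp (hno p' p t s hsq.swap hswapsub hp')
    · exact Or.inr ⟨hp, hp'⟩
  have crossC0 : ∀ p p' s t q q' u w, Sq4 G A B p p' s t → ({p, p', s, t} : Set V) ⊆ C →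
      Sq4 G A B q q' u w → ({q, q', u, w} : Set V) ⊆ C → s = u →
      p ∈ A₁ → p' ∈ A₁ → q ∈ A₂ → q' ∈ A₂ → False := by
    intro p p' s t q q' u w h1 hsub1 h2 hsub2 hzz hp hp' hq hq'
    subst hzz
    obtain ⟨hpA, hp'A, hsB, htB, hpp, hst, a1, a2, a3, a4⟩ := h1
    obtain ⟨hqA, hq'A, _, hwB, hqq, hsw, b1, b2, b3, b4⟩ := h2
    have hqp' : q ≠ p' := fun e => Set.disjoint_left.mp hd (e ▸ hp') hq
    have hpq' : p ≠ q' := fun e => Set.disjoint_left.mp hd hp (e ▸ hq')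
    have hpq : p ≠ q := fun e => Set.disjoint_left.mp hd hp (e ▸ hq)
    rcases le_or_gt 0 (G.θ q t) with hqt | hqt
    · -- square (p', q, t, s)
      have hnsq : Sq4 G A B p' q t s := ⟨hp'A, hqA, htB, hsB, hqp'.symm, hst.symm, a2, b1, hqt, a3⟩
      have hsubn : ({p', q, t, s} : Set V) ⊆ C := by
        intro x hx
        simp only [Set.mem_insert_iff, Set.mem_singleton_iff] at hx
        rcases hx with rfl | rfl | rfl | rfl
        · exact hsub1 (by simp)
        · exact hsub2 (by simp)
        · exact hsub1 (by simp)
        · exact hsub1 (by simp)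
      exact hno p' q t s hnsq hsubn hp' hq
    rcases le_or_gt 0 (G.θ p w) with hpw | hpw
    · -- square (p, q', s, w)
      have hnsq : Sq4 G A B p q' s w := ⟨hpA, hq'A, hsB, hwB, hpq', hsw, a1, b2, b3, hpw⟩
      have hsubn : ({p, q', s, w} : Set V) ⊆ C := by
        intro x hx
        simp only [Set.mem_insert_iff, Set.mem_singleton_iff] at hx
        rcases hx with rfl | rfl | rfl | rfl
        · exact hsub1 (by simp)
        · exact hsub2 (by simp)
        · exact hsub1 (by simp)
        · exact hsub2 (by simp)
      exact absurd hq' (hno p q' s w hnsq hsubn hp)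
    · -- square (p, q, w, t)
      have hwt : w ≠ t := fun e => by rw [e] at b4; omega
      have hnsq : Sq4 G A B p q w t :=
        ⟨hpA, hqA, hwB, htB, hpq, hwt, by omega, by omega, b4, a4⟩
      have hsubn : ({p, q, w, t} : Set V) ⊆ C := by
        intro x hx
        simp only [Set.mem_insert_iff, Set.mem_singleton_iff] at hx
        rcases hx with rfl | rfl | rfl | rfl
        · exact hsub1 (by simp)
        · exact hsub2 (by simp)
        · exact hsub2 (by simp)
        · exact hsub1 (by simp)
      exact absurd hq (hno p q w t hnsq hsubn hp)
  have crossC : ∀ p p' s t q q' u w z, Sq4 G A B p p' s t → ({p, p', s, t} : Set V) ⊆ C →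
      Sq4 G A B q q' u w → ({q, q', u, w} : Set V) ⊆ C →
      (z = s ∨ z = t) → (z = u ∨ z = w) →
      p ∈ A₁ → p' ∈ A₁ → q ∈ A₂ → q' ∈ A₂ → False := by
    intro p p' s t q q' u w z h1 hsub1 h2 hsub2 hz1 hz2 hp hp' hq hq'
    have hswap1 : ({p', p, t, s} : Set V) ⊆ C := fun x hx => hsub1 (by
      simp only [Set.mem_insert_iff, Set.mem_singleton_iff] at hx ⊢; tauto)
    have hswap2 : ({q', q, w, u} : Set V) ⊆ C := fun x hx => hsub2 (by
      simp only [Set.mem_insert_iff, Set.mem_singleton_iff] at hx ⊢; tauto)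
    rcases hz1 with rfl | rfl <;> rcases hz2 with h | h
    · exact crossC0 p p' z t q q' u w h1 hsub1 h2 hsub2 h hp hp' hq hq'
    · exact crossC0 p p' z t q' q w u h1 hsub1 h2.swap hswap2 h hp hp' hq' hq
    · exact crossC0 p' p z s q q' u w h1.swap hswap1 h2 hsub2 h hp' hp hq hq'
    · exact crossC0 p' p z s q' q w u h1.swap hswap1 h2.swap hswap2 h hp' hp hq' hq
  obtain ⟨x1, hx1⟩ := ha1
  obtain ⟨x2, hx2⟩ := ha2
  have hx1' : x1 ∈ A ∩ C := by rw [← hu]; exact Or.inl hx1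
  have hx2' : x2 ∈ A ∩ C := by rw [← hu]; exact Or.inr hx2
  have main : ∀ y, Relation.ReflTransGen (SqRel G A B) x1 y →
      (y ∈ C ∧ ∀ p p' s t, Sq4 G A B p p' s t → y ∈ ({p, p', s, t} : Set V) →
        p ∈ A₁ ∧ p' ∈ A₁) := by
    intro y hy
    induction hy with
    | refl =>
      refine ⟨hx1'.2, ?_⟩
      intro p p' s t hsq hmem
      have hsub : ({p, p', s, t} : Set V) ⊆ C :=
        fun z hz => hCcl x1 z hx1'.2 ⟨_, _, _, _, hsq, hmem, hz⟩
      rcases typ p p' s t hsq hsub with h | h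
      · exact h
      · exfalso
        rcases quad_A hdisj hsq hmem hx1'.1 with rfl | rfl
        · exact Set.disjoint_left.mp hd hx1 h.1
        · exact Set.disjoint_left.mp hd hx1 h.2
    | tail h1 h2 ih =>
      obtain ⟨q, q', u, w, hsq2, hcm, hym⟩ := h2
      have hsub2 : ({q, q', u, w} : Set V) ⊆ C :=
        fun z hz => hCcl _ z ih.1 ⟨_, _, _, _, hsq2, hcm, hz⟩
      have hyC := hsub2 hym
      refine ⟨hyC, ?_⟩
      intro p p' s t hsq hmem
      have hsub1 : ({p, p', s, t} : Set V) ⊆ C :=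
        fun z hz => hCcl _ z hyC ⟨_, _, _, _, hsq, hmem, hz⟩
      have hq2A := ih.2 q q' u w hsq2 hcm
      rcases typ p p' s t hsq hsub1 with h | h
      · exact h
      · exfalso
        rcases zloc hsq hmem with ⟨hA1c, hyA⟩ | ⟨hyB, hst⟩
        · rcases hA1c with rfl | rfl <;> rcases quad_A hdisj hsq2 hym hyA with rfl | rfl <;>
            first
              | exact Set.disjoint_left.mp hd hq2A.1 h.1
              | exact Set.disjoint_left.mp hd hq2A.2 h.1
              | exact Set.disjoint_left.mp hd hq2A.1 h.2
              | exact Set.disjoint_left.mp hd hq2A.2 h.2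
        · have huw := quad_B hdisj hsq2 hym hyB
          exact crossC q q' u w p p' s t _ hsq2 hsub2 hsq hsub1 huw hst hq2A.1 hq2A.2 h.1 h.2
  obtain ⟨p, p', s, t, hsq, hmem, hsub⟩ := hCsq x2 hx2'.2
  have hp := (main x2 (hCconn x1 x2 hx1'.2 hx2'.2)).2 p p' s t hsq hmem
  rcases quad_A hdisj hsq hmem hx2'.1 with rfl | rfl
  · exact Set.disjoint_left.mp hd hp.1 hx2
  · exact Set.disjoint_left.mp hd hp.2 hx2

end Part

section Extract

variable {G : Trigraph V} {A B : Set V}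

lemma notSameClique {K : Set V} (hK : G.IsStrongClique K) {x y : V}
    (hxy : G.AntiAdj x y) (hx : x ∈ K) (hy : y ∈ K) : False := by
  have h1 : G.θ x y = 1 := hK hx hy hxy.1
  rcases hxy.2 with e | e <;> omega

lemma exists_sq4 (hA : G.IsStrongClique A) (hB : G.IsStrongClique B)
    (h : G.HasSquareIn (A ∪ B)) :
    ∃ a a' b b', Sq4 G A B a a' b b' := by
  obtain ⟨v1, v2, v3, v4, hs, hsub⟩ := h
  obtain ⟨h13, h24, h12, h23, h34, h41⟩ := hs
  have t13 : G.θ v1 v3 ≤ 0 := by rcases h13.2 with e | e <;> omega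
  have t24 : G.θ v2 v4 ≤ 0 := by rcases h24.2 with e | e <;> omega
  have s12 : 0 ≤ G.θ v1 v2 := by rcases h12.2 with e | e <;> omega
  have s23 : 0 ≤ G.θ v2 v3 := by rcases h23.2 with e | e <;> omega
  have s34 : 0 ≤ G.θ v3 v4 := by rcases h34.2 with e | e <;> omega
  have s41 : 0 ≤ G.θ v4 v1 := by rcases h41.2 with e | e <;> omega
  have hm1 : v1 ∈ A ∪ B := hsub (by simp)
  have hm2 : v2 ∈ A ∪ B := hsub (by simp)
  have hm3 : v3 ∈ A ∪ B := hsub (by simp)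
  have hm4 : v4 ∈ A ∪ B := hsub (by simp)
  rcases hm1 with h1A | h1B
  · have h3B : v3 ∈ B := by
      rcases hm3 with h3A | h3B
      · exact absurd (notSameClique hA h13 h1A h3A) not_false
      · exact h3B
    rcases hm2 with h2A | h2B
    · have h4B : v4 ∈ B := by
        rcases hm4 with h4A | h4B
        · exact absurd (notSameClique hA h24 h2A h4A) not_false
        · exact h4B
      exact ⟨v1, v2, v3, v4, h1A, h2A, h3B, h4B, h12.1, h34.1, t13, t24, s23,
        by have := G.symm v4 v1; omega⟩
    · have h4A : v4 ∈ A := by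
        rcases hm4 with h4A | h4B
        · exact h4A
        · exact absurd (notSameClique hB h24 h2B h4B) not_false
      exact ⟨v1, v4, v3, v2, h1A, h4A, h3B, h2B, fun e => h41.1 e.symm, fun e => h23.1 e.symm,
        t13, by have := G.symm v2 v4; omega, by have := G.symm v3 v4; omega, s12⟩
  · have h3A : v3 ∈ A := by
      rcases hm3 with h3A | h3B
      · exact h3A
      · exact absurd (notSameClique hB h13 h1B h3B) not_false
    rcases hm2 with h2A | h2B
    · have h4B : v4 ∈ B := by
        rcases hm4 with h4A | h4B
        · exact absurd (notSameClique hA h24 h2A h4A) not_false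
        · exact h4B
      exact ⟨v3, v2, v1, v4, h3A, h2A, h1B, h4B, fun e => h23.1 e.symm, fun e => h41.1 e.symm,
        by have := G.symm v1 v3; omega, t24, by have := G.symm v1 v2; omega, s34⟩
    · have h4A : v4 ∈ A := by
        rcases hm4 with h4A | h4B
        · exact h4A
        · exact absurd (notSameClique hB h24 h2B h4B) not_false
      exact ⟨v3, v4, v1, v2, h3A, h4A, h1B, h2B, h34.1, h12.1,
        by have := G.symm v1 v3; omega, by have := G.symm v2 v4; omega, s41,
        by have := G.symm v2 v3; omega⟩

lemma sq4_isSquare (hA : G.IsStrongClique A) (hB : G.IsStrongClique B)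
    (hdisj : Disjoint A B) {a a' b b' : V} (h : Sq4 G A B a a' b b') :
    G.IsSquare a a' b b' := by
  obtain ⟨ha, ha', hb, hb', hne, hne', t1, t2, s1, s2⟩ := h
  have nab : a ≠ b := fun e => Set.disjoint_left.mp hdisj ha (by rw [e]; exact hb)
  have na'b' : a' ≠ b' := fun e => Set.disjoint_left.mp hdisj ha' (by rw [e]; exact hb')
  have na'b : a' ≠ b := fun e => Set.disjoint_left.mp hdisj ha' (by rw [e]; exact hb)
  have nab' : a ≠ b' := fun e => Set.disjoint_left.mp hdisj ha (by rw [e]; exact hb')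
  refine ⟨⟨nab, ?_⟩, ⟨na'b', ?_⟩, ⟨hne, Or.inl (hA ha ha' hne)⟩, ⟨na'b, ?_⟩,
    ⟨hne', Or.inl (hB hb hb' hne')⟩, ⟨nab'.symm ∘ Eq.symm ∘ Eq.symm, ?_⟩⟩
  · rcases G.range_mem a b with e | e | e <;> omega
  · rcases G.range_mem a' b' with e | e | e <;> omega
  · rcases G.range_mem a' b with e | e | e <;> omega
  · have := G.symm a b'
    rcases G.range_mem b' a with e | e | e <;> omega

end Extract

end SCAux

/-- Every deletion-minimal homogeneous pair of strong cliques contains a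
square-connected homogeneous pair of strong cliques. -/
theorem deletionMinimal_contains_squareConnected {V : Type} [Fintype V] (G : Trigraph V)
    (A B : Set V) (h : G.DeletionMinimal A B) :
    ∃ A' B' : Set V, G.SquareConnected A' B' ∧ A' ⊆ A ∧ B' ⊆ B := by
  classical
  obtain ⟨hp, hsqin, -, -⟩ := h
  obtain ⟨hAne, hBne, hdisj, hA, hB, hns, hhom⟩ := hp
  obtain ⟨a0, a0', b0, b0', hQ0⟩ := exists_sq4 hA hB hsqin
  set C : Set V := {x | Relation.ReflTransGen (SqRel G A B) a0 x} with hC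
  have ha0C : a0 ∈ C := Relation.ReflTransGen.refl
  have hCcl : ∀ x y, x ∈ C → SqRel G A B x y → y ∈ C :=
    fun x y hx hr => Relation.ReflTransGen.tail hx hr
  have hQ0sub : ({a0, a0', b0, b0'} : Set V) ⊆ C :=
    fun z hz => hCcl a0 z ha0C ⟨_, _, _, _, hQ0, by simp, hz⟩
  have hsymm : ∀ x y, SqRel G A B x y → SqRel G A B y x := by
    rintro x y ⟨a, a', b, b', hs, hx, hy⟩
    exact ⟨a, a', b, b', hs, hy, hx⟩
  have hCconn : ∀ x y, x ∈ C → y ∈ C → Relation.ReflTransGen (SqRel G A B) x y := by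
    intro x y hx hy
    exact Relation.ReflTransGen.trans
      ((@Relation.ReflTransGen.stdSymm _ _ ⟨fun u w hr => hsymm u w hr⟩).symm _ _ hx) hy
  have hCsq : ∀ x ∈ C, ∃ p p' s t, Sq4 G A B p p' s t ∧ x ∈ ({p, p', s, t} : Set V) ∧
      ({p, p', s, t} : Set V) ⊆ C := by
    intro x hx
    rcases Relation.ReflTransGen.cases_tail hx with e | ⟨c, hc, hr⟩
    · refine ⟨a0, a0', b0, b0', hQ0, ?_, hQ0sub⟩
      rw [e]; simp
    · obtain ⟨p, p', s, t, hs, _, hxm⟩ := hr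
      exact ⟨p, p', s, t, hs, hxm, fun z hz => hCcl x z hx ⟨_, _, _, _, hs, hxm, hz⟩⟩
  have hCsq_f : ∀ x ∈ C, ∃ p p' s t, Sq4 G B A p p' s t ∧ x ∈ ({p, p', s, t} : Set V) ∧
      ({p, p', s, t} : Set V) ⊆ C := by
    intro x hx
    obtain ⟨p, p', s, t, hs, hm, hsub⟩ := hCsq x hx
    refine ⟨s, t, p, p', hs.flip, ?_, fun z hz => hsub ?_⟩
    · simp only [Set.mem_insert_iff, Set.mem_singleton_iff] at hm ⊢; tauto
    · simp only [Set.mem_insert_iff, Set.mem_singleton_iff] at hz ⊢; tauto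
  have hrel_f : ∀ x y, SqRel G B A x y → SqRel G A B x y := by
    rintro x y ⟨p, p', s, t, hs, hx, hy⟩
    refine ⟨s, t, p, p', hs.flip, ?_, ?_⟩ <;>
      simp only [Set.mem_insert_iff, Set.mem_singleton_iff] at hx hy ⊢ <;> tauto
  have hrel_f' : ∀ x y, SqRel G A B x y → SqRel G B A x y := by
    rintro x y ⟨p, p', s, t, hs, hx, hy⟩
    refine ⟨s, t, p, p', hs.flip, ?_, ?_⟩ <;>
      simp only [Set.mem_insert_iff, Set.mem_singleton_iff] at hx hy ⊢ <;> tauto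
  have hCcl_f : ∀ x y, x ∈ C → SqRel G B A x y → y ∈ C :=
    fun x y hx hr => hCcl x y hx (hrel_f x y hr)
  have hCconn_f : ∀ x y, x ∈ C → y ∈ C → Relation.ReflTransGen (SqRel G B A) x y :=
    fun x y hx hy => Relation.ReflTransGen.mono (fun u w hr => hrel_f' u w hr) _ _ (hCconn x y hx hy)
  have ha0'C : a0' ∈ C := hQ0sub (by simp)
  have hb0C : b0 ∈ C := hQ0sub (by simp)
  have hAsub : A ∩ C ⊆ A := Set.inter_subset_left
  have hBsub : B ∩ C ⊆ B := Set.inter_subset_left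
  refine ⟨A ∩ C, B ∩ C, ⟨⟨⟨a0, hQ0.1, ha0C⟩, ⟨b0, hQ0.2.2.1, hb0C⟩,
    hdisj.mono hAsub hBsub, hA.mono hAsub, hB.mono hBsub, ?_, ?_⟩, ?_, ?_⟩,
    hAsub, hBsub⟩
  · rintro ⟨a, b, hAeq, hBeq⟩
    have h1 : a0 ∈ A ∩ C := ⟨hQ0.1, ha0C⟩
    have h2 : a0' ∈ A ∩ C := ⟨hQ0.2.1, ha0'C⟩
    rw [hAeq, Set.mem_singleton_iff] at h1 h2
    exact hQ0.2.2.2.2.1 (h1.trans h2.symm)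
  · intro v hv
    by_cases hvA : v ∈ A
    · have hvC : v ∉ C := fun hc => hv (Or.inl ⟨hvA, hc⟩)
      constructor
      · left
        intro u hu w hw
        rw [Set.mem_singleton_iff] at hu
        subst hu
        exact hA hvA hw.1 (fun e => hvC (by rw [e]; exact hw.2))
      · rcases homogSide hdisj hCsq hCcl hCconn v hvA hvC with hc | hc
        · left
          intro u hu w hw
          rw [Set.mem_singleton_iff] at hu
          subst hu
          exact hc w hw
        · right
          intro u hu w hw
          rw [Set.mem_singleton_iff] at hu
          subst hu
          exact hc w hw
    · by_cases hvB : v ∈ B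
      · have hvC : v ∉ C := fun hc => hv (Or.inr ⟨hvB, hc⟩)
        constructor
        · rcases homogSide hdisj.symm hCsq_f hCcl_f hCconn_f v hvB hvC with hc | hc
          · left
            intro u hu w hw
            rw [Set.mem_singleton_iff] at hu
            subst hu
            exact hc w hw
          · right
            intro u hu w hw
            rw [Set.mem_singleton_iff] at hu
            subst hu
            exact hc w hw
        · left
          intro u hu w hw
          rw [Set.mem_singleton_iff] at hu
          subst hu
          exact hB hvB hw.1 (fun e => hvC (by rw [e]; exact hw.2))
      · have hout : v ∉ A ∪ B := fun hc => by rcases hc with hc | hc; exacts [hvA hc, hvB hc]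
        obtain ⟨hA1, hB1⟩ := hhom v hout
        constructor
        · rcases hA1 with hc | hc
          · exact Or.inl fun u hu w hw => hc u hu w hw.1
          · exact Or.inr fun u hu w hw => hc u hu w hw.1
        · rcases hB1 with hc | hc
          · exact Or.inl fun u hu w hw => hc u hu w hw.1
          · exact Or.inr fun u hu w hw => hc u hu w hw.1
  · intro A₁ A₂ h1 h2 hun hd
    obtain ⟨a, a', b, b', hsq, hsub, ha1, ha2⟩ :=
      partSide hdisj hCsq hCcl hCconn A₁ A₂ h1 h2 hun hd
    refine ⟨a, a', b, b', sq4_isSquare hA hB hdisj hsq, ?_,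
      ⟨a, ⟨by simp, ha1⟩⟩, ⟨a', ⟨by simp, ha2⟩⟩⟩
    intro z hz
    have hzC := hsub hz
    simp only [Set.mem_insert_iff, Set.mem_singleton_iff] at hz
    rcases hz with rfl | rfl | rfl | rfl
    · exact Or.inl ⟨hsq.1, hzC⟩
    · exact Or.inl ⟨hsq.2.1, hzC⟩
    · exact Or.inr ⟨hsq.2.2.1, hzC⟩
    · exact Or.inr ⟨hsq.2.2.2.1, hzC⟩
  · intro B₁ B₂ h1 h2 hun hd
    obtain ⟨b, b', a, a', hsq, hsub, hb1, hb2⟩ :=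
      partSide hdisj.symm hCsq_f hCcl_f hCconn_f B₁ B₂ h1 h2 hun hd
    refine ⟨b, b', a, a', sq4_isSquare hB hA hdisj.symm hsq, ?_,
      ⟨b, ⟨by simp, hb1⟩⟩, ⟨b', ⟨by simp, hb2⟩⟩⟩
    intro z hz
    have hzC := hsub hz
    simp only [Set.mem_insert_iff, Set.mem_singleton_iff] at hz
    rcases hz with rfl | rfl | rfl | rfl
    · exact Or.inr ⟨hsq.1, hzC⟩
    · exact Or.inr ⟨hsq.2.1, hzC⟩
    · exact Or.inl ⟨hsq.2.2.1, hzC⟩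
    · exact Or.inl ⟨hsq.2.2.2.1, hzC⟩
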